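/- arXiv:2509.17929 — 2 statements merged into one kernel-verified Lean document; each statement's English description precedes it below -/
import Mathlib

section
/- Let T be a subset of Fin (n+1) with σ·T = T, and suppose that the cardinality of T ∩ E equals 2. Then {T' ∈ O(T) | σ·T' = T'} = {T, τ·T} with τ·T ≠ T, and moreover τ′·T = T and τ′·(τ·T) = τ·T. In particular the set of σ-invariant elements of O(T) has exactly two elements, each fixed by τ′, so its quotient by the action of τ′ also has exactly two elements. -/
open Fin.NatCast

/-- Vertices of the affine Dynkin diagram of type `D_n` are identified with
`Fin (n+1) = {0, 1, …, n}`. `sigmaD n` is the transposition exchanging `n-1` and `n`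
(the unramified Galois involution). -/
def sigmaD (n : ℕ) : Fin (n + 1) → Fin (n + 1) := fun i =>
  if (i : ℕ) = n - 1 then (↑n : Fin (n + 1))
  else if (i : ℕ) = n then (↑(n - 1) : Fin (n + 1))
  else i

/-- `tauPrimeD n` exchanges `0` with `1` and `n-1` with `n`, fixing all other vertices
(the generator of `Ξ`). -/
def tauPrimeD (n : ℕ) : Fin (n + 1) → Fin (n + 1) := fun i =>
  if (i : ℕ) = 0 then (↑(1 : ℕ) : Fin (n + 1))
  else if (i : ℕ) = 1 then (↑(0 : ℕ) : Fin (n + 1))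
  else if (i : ℕ) = n - 1 then (↑n : Fin (n + 1))
  else if (i : ℕ) = n then (↑(n - 1) : Fin (n + 1))
  else i

/-- `tauD n` is the involution with `τ(0) = n-1`, `τ(1) = n`, `τ(n-1) = 0`, `τ(n) = 1` and
`τ(i) = n - i` for `2 ≤ i ≤ n-2`. -/
def tauD (n : ℕ) : Fin (n + 1) → Fin (n + 1) := fun i =>
  if (i : ℕ) = 0 then (↑(n - 1) : Fin (n + 1))
  else if (i : ℕ) = 1 then (↑n : Fin (n + 1))
  else if (i : ℕ) = n - 1 then (↑(0 : ℕ) : Fin (n + 1))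
  else if (i : ℕ) = n then (↑(1 : ℕ) : Fin (n + 1))
  else (↑(n - (i : ℕ)) : Fin (n + 1))

/-- The extremal vertices `{0, 1, n-1, n}` of the affine Dynkin diagram of type `D_n`. -/
def extremalD (n : ℕ) : Set (Fin (n + 1)) :=
  {(↑(0 : ℕ) : Fin (n + 1)), (↑(1 : ℕ) : Fin (n + 1)), (↑(n - 1) : Fin (n + 1)),
    (↑n : Fin (n + 1))}

/-- The orbit `O(T) = {T, τ·T, τ′·T, (τ∘τ′)·T}` of a type `T` under the Klein four-group
`{id, τ, τ′, τ∘τ′}` (realizing `Ξ^nr`), acting on subsets by images. -/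
def orbD (n : ℕ) (T : Set (Fin (n + 1))) : Set (Set (Fin (n + 1))) :=
  {T, tauD n '' T, tauPrimeD n '' T, (tauD n ∘ tauPrimeD n) '' T}

lemma valn {n : ℕ} (m : ℕ) (h : m ≤ n) : ((↑m : Fin (n+1)) : ℕ) = m := by
  simp [Fin.val_natCast, Nat.mod_eq_of_lt (by omega : m < n + 1)]

lemma invol_mem_image {α} {f : α → α} (hf : ∀ x, f (f x) = x) (S : Set α) (j : α) :
    j ∈ f '' S ↔ f j ∈ S := by
  constructor
  · rintro ⟨x, hx, rfl⟩; rwa [hf]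
  · intro h; exact ⟨f j, h, hf j⟩

lemma invol_image_eq {α} {f : α → α} (hf : ∀ x, f (f x) = x) (S : Set α)
    (h : ∀ j, f j ∈ S ↔ j ∈ S) : f '' S = S :=
  Set.ext fun j => (invol_mem_image hf S j).trans (h j)

lemma sig_apply {n : ℕ} (m : ℕ) (hm : m ≤ n) :
    sigmaD n (↑m : Fin (n+1)) =
      if m = n - 1 then (↑n : Fin (n+1)) else if m = n then ↑(n-1) else ↑m := by
  simp only [sigmaD, valn m hm]

lemma tp_apply {n : ℕ} (m : ℕ) (hm : m ≤ n) :
    tauPrimeD n (↑m : Fin (n+1)) =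
      if m = 0 then (↑(1:ℕ) : Fin (n+1)) else if m = 1 then ↑(0:ℕ)
      else if m = n - 1 then ↑n else if m = n then ↑(n-1) else ↑m := by
  simp only [tauPrimeD, valn m hm]

lemma tau_apply {n : ℕ} (m : ℕ) (hm : m ≤ n) :
    tauD n (↑m : Fin (n+1)) =
      if m = 0 then (↑(n-1) : Fin (n+1)) else if m = 1 then ↑n
      else if m = n - 1 then ↑(0:ℕ) else if m = n then ↑(1:ℕ) else ↑(n - m) := by
  simp only [tauD, valn m hm]

lemma fin_cast_val {n : ℕ} (i : Fin (n+1)) : (↑((i:ℕ)) : Fin (n+1)) = i := by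
  apply Fin.ext; rw [valn _ (by omega : (i:ℕ) ≤ n)]

lemma sig_invol {n : ℕ} (hn : 4 ≤ n) : ∀ i, sigmaD n (sigmaD n i) = i := by
  intro i
  have hi : (i : ℕ) ≤ n := by omega
  rw [← fin_cast_val i]
  generalize (i : ℕ) = m at hi ⊢
  rw [sig_apply m hi]
  split_ifs with h1 h2
  · rw [sig_apply n le_rfl, if_neg (by omega), if_pos rfl, h1]
  · rw [sig_apply (n-1) (by omega), if_pos rfl, h2]
  · rw [sig_apply m hi, if_neg h1, if_neg h2]

lemma tp_invol {n : ℕ} (hn : 4 ≤ n) : ∀ i, tauPrimeD n (tauPrimeD n i) = i := by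
  intro i
  have hi : (i : ℕ) ≤ n := by omega
  rw [← fin_cast_val i]
  generalize (i : ℕ) = m at hi ⊢
  rw [tp_apply m hi]
  split_ifs with h1 h2 h3 h4
  · rw [tp_apply 1 (by omega), if_neg (by omega), if_pos rfl, h1]
  · rw [tp_apply 0 (by omega), if_pos rfl, h2]
  · rw [tp_apply n le_rfl, if_neg (by omega), if_neg (by omega), if_neg (by omega),
      if_pos rfl, h3]
  · rw [tp_apply (n-1) (by omega), if_neg (by omega), if_neg (by omega), if_pos rfl, h4]
  · rw [tp_apply m hi, if_neg h1, if_neg h2, if_neg h3, if_neg h4]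

lemma tau_invol {n : ℕ} (hn : 4 ≤ n) : ∀ i, tauD n (tauD n i) = i := by
  intro i
  have hi : (i : ℕ) ≤ n := by omega
  rw [← fin_cast_val i]
  generalize (i : ℕ) = m at hi ⊢
  rw [tau_apply m hi]
  split_ifs with h1 h2 h3 h4
  · rw [tau_apply (n-1) (by omega), if_neg (by omega), if_neg (by omega), if_pos rfl, h1]
  · rw [tau_apply n le_rfl, if_neg (by omega), if_neg (by omega), if_neg (by omega),
      if_pos rfl, h2]
  · rw [tau_apply 0 (by omega), if_pos rfl, h3]
  · rw [tau_apply 1 (by omega), if_neg (by omega), if_pos rfl, h4]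
  · rw [tau_apply (n - m) (by omega), if_neg (by omega), if_neg (by omega),
      if_neg (by omega), if_neg (by omega)]
    congr 1; omega

set_option maxHeartbeats 1000000 in
lemma keyAC {n : ℕ} (hn : 4 ≤ n) (T : Set (Fin (n + 1)))
    (hσ : sigmaD n '' T = T)
    (hE : (T ∩ extremalD n).ncard = 2) :
    ((↑(0:ℕ) : Fin (n+1)) ∈ T ∧ (↑(1:ℕ) : Fin (n+1)) ∈ T ∧
      (↑(n-1) : Fin (n+1)) ∉ T ∧ (↑n : Fin (n+1)) ∉ T) ∨
    ((↑(0:ℕ) : Fin (n+1)) ∉ T ∧ (↑(1:ℕ) : Fin (n+1)) ∉ T ∧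
      (↑(n-1) : Fin (n+1)) ∈ T ∧ (↑n : Fin (n+1)) ∈ T) := by
  set a : Fin (n+1) := (↑(0:ℕ) : Fin (n+1)) with ha_def
  set b : Fin (n+1) := (↑(1:ℕ) : Fin (n+1)) with hb_def
  set c : Fin (n+1) := (↑(n-1) : Fin (n+1)) with hc_def
  set d : Fin (n+1) := (↑n : Fin (n+1)) with hd_def
  have hab : a ≠ b := fun h => by
    have := congrArg Fin.val h
    rw [ha_def, hb_def, valn 0 (by omega), valn 1 (by omega)] at this; omega
  have hac : a ≠ c := fun h => by
    have := congrArg Fin.val h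
    rw [ha_def, hc_def, valn 0 (by omega), valn (n-1) (by omega)] at this; omega
  have had : a ≠ d := fun h => by
    have := congrArg Fin.val h
    rw [ha_def, hd_def, valn 0 (by omega), valn n le_rfl] at this; omega
  have hbc : b ≠ c := fun h => by
    have := congrArg Fin.val h
    rw [hb_def, hc_def, valn 1 (by omega), valn (n-1) (by omega)] at this; omega
  have hbd : b ≠ d := fun h => by
    have := congrArg Fin.val h
    rw [hb_def, hd_def, valn 1 (by omega), valn n le_rfl] at this; omega
  have hcd : c ≠ d := fun h => by
    have := congrArg Fin.val h
    rw [hc_def, hd_def, valn (n-1) (by omega), valn n le_rfl] at this; omega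
  have hmem : ∀ j, sigmaD n j ∈ T ↔ j ∈ T := fun j =>
    (invol_mem_image (sig_invol hn) T j).symm.trans (by rw [hσ])
  have hB : (c ∈ T ↔ d ∈ T) := by
    have h1 : sigmaD n c = d := by rw [hc_def, sig_apply (n-1) (by omega), if_pos rfl]
    have := hmem c; rw [h1] at this; exact this.symm
  have hEeq : T ∩ extremalD n = {x | x ∈ T ∧ (x = a ∨ x = b ∨ x = c ∨ x = d)} := by
    ext x
    simp only [Set.mem_inter_iff, extremalD, Set.mem_insert_iff, Set.mem_singleton_iff,
      Set.mem_setOf_eq, ha_def, hb_def, hc_def, hd_def]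
  by_cases ha : a ∈ T <;> by_cases hb : b ∈ T <;> by_cases hc : c ∈ T
  · -- all four in
    exfalso
    have hd : d ∈ T := hB.mp hc
    have : T ∩ extremalD n = {a, b, c, d} := by
      rw [hEeq]; ext x
      simp only [Set.mem_setOf_eq, Set.mem_insert_iff, Set.mem_singleton_iff]
      constructor
      · rintro ⟨_, h⟩; exact h
      · rintro (rfl | rfl | rfl | rfl) <;> tauto
    rw [this, Set.ncard_insert_of_notMem (by simp [hab, hac, had]) (Set.toFinite _),
      Set.ncard_insert_of_notMem (by simp [hbc, hbd]) (Set.toFinite _),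
      Set.ncard_pair hcd] at hE
    omega
  · -- a, b in, c, d out : good
    exact Or.inl ⟨ha, hb, hc, fun h => hc (hB.mpr h)⟩
  · exfalso
    have hd : d ∈ T := hB.mp hc
    have : T ∩ extremalD n = {a, c, d} := by
      rw [hEeq]; ext x
      simp only [Set.mem_setOf_eq, Set.mem_insert_iff, Set.mem_singleton_iff]
      constructor
      · rintro ⟨hx, rfl | rfl | rfl | rfl⟩ <;> tauto
      · rintro (rfl | rfl | rfl) <;> tauto
    rw [this, Set.ncard_insert_of_notMem (by simp [hac, had]) (Set.toFinite _),
      Set.ncard_pair hcd] at hE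
    omega
  · exfalso
    have hd : d ∉ T := fun h => hc (hB.mpr h)
    have : T ∩ extremalD n = {a} := by
      rw [hEeq]; ext x
      simp only [Set.mem_setOf_eq, Set.mem_singleton_iff]
      constructor
      · rintro ⟨hx, rfl | rfl | rfl | rfl⟩ <;> tauto
      · rintro rfl; tauto
    rw [this, Set.ncard_singleton] at hE
    omega
  · exfalso
    have hd : d ∈ T := hB.mp hc
    have : T ∩ extremalD n = {b, c, d} := by
      rw [hEeq]; ext x
      simp only [Set.mem_setOf_eq, Set.mem_insert_iff, Set.mem_singleton_iff]
      constructor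
      · rintro ⟨hx, rfl | rfl | rfl | rfl⟩ <;> tauto
      · rintro (rfl | rfl | rfl) <;> tauto
    rw [this, Set.ncard_insert_of_notMem (by simp [hbc, hbd]) (Set.toFinite _),
      Set.ncard_pair hcd] at hE
    omega
  · exfalso
    have hd : d ∉ T := fun h => hc (hB.mpr h)
    have : T ∩ extremalD n = {b} := by
      rw [hEeq]; ext x
      simp only [Set.mem_setOf_eq, Set.mem_singleton_iff]
      constructor
      · rintro ⟨hx, rfl | rfl | rfl | rfl⟩ <;> tauto
      · rintro rfl; tauto
    rw [this, Set.ncard_singleton] at hE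
    omega
  · -- a, b out, c, d in : good
    exact Or.inr ⟨ha, hb, hc, hB.mp hc⟩
  · exfalso
    have hd : d ∉ T := fun h => hc (hB.mpr h)
    have : T ∩ extremalD n = (∅ : Set (Fin (n+1))) := by
      rw [hEeq]; ext x
      simp only [Set.mem_setOf_eq, Set.mem_empty_iff_false, iff_false]
      rintro ⟨hx, rfl | rfl | rfl | rfl⟩ <;> tauto
    rw [this, Set.ncard_empty] at hE
    omega

/-- Type `²D_n` (`n ≥ 4`): if `T` is a `σ`-invariant type such that `T ∩ E` has exactly two
elements (where `E` is the set of extremal vertices), then the `σ`-invariant elements of the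
orbit `O(T)` are exactly `{T, τ·T}` with `τ·T ≠ T`, and both are fixed by `τ′`; so the set
of `σ`-invariant elements of `O(T)` has exactly two elements and its quotient by the action
of `τ′` also has exactly two elements. -/
theorem stmt12 (n : ℕ) (hn : 4 ≤ n) (T : Set (Fin (n + 1)))
    (hσ : sigmaD n '' T = T)
    (hE : (T ∩ extremalD n).ncard = 2) :
    {T' ∈ orbD n T | sigmaD n '' T' = T'} = {T, tauD n '' T} ∧
    tauD n '' T ≠ T ∧
    tauPrimeD n '' T = T ∧
    tauPrimeD n '' (tauD n '' T) = tauD n '' T ∧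
    {T' ∈ orbD n T | sigmaD n '' T' = T'}.ncard = 2 := by
  set a : Fin (n+1) := (↑(0:ℕ) : Fin (n+1)) with ha_def
  set b : Fin (n+1) := (↑(1:ℕ) : Fin (n+1)) with hb_def
  set c : Fin (n+1) := (↑(n-1) : Fin (n+1)) with hc_def
  set d : Fin (n+1) := (↑n : Fin (n+1)) with hd_def
  have hab : a ≠ b := fun h => by
    have := congrArg Fin.val h
    rw [ha_def, hb_def, valn 0 (by omega), valn 1 (by omega)] at this; omega
  have hac : a ≠ c := fun h => by
    have := congrArg Fin.val h
    rw [ha_def, hc_def, valn 0 (by omega), valn (n-1) (by omega)] at this; omega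
  have had : a ≠ d := fun h => by
    have := congrArg Fin.val h
    rw [ha_def, hd_def, valn 0 (by omega), valn n le_rfl] at this; omega
  have hbc : b ≠ c := fun h => by
    have := congrArg Fin.val h
    rw [hb_def, hc_def, valn 1 (by omega), valn (n-1) (by omega)] at this; omega
  have hbd : b ≠ d := fun h => by
    have := congrArg Fin.val h
    rw [hb_def, hd_def, valn 1 (by omega), valn n le_rfl] at this; omega
  have hcd : c ≠ d := fun h => by
    have := congrArg Fin.val h
    rw [hc_def, hd_def, valn (n-1) (by omega), valn n le_rfl] at this; omega
  -- σ-invariance gives membership transfer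
  have hmem : ∀ j, sigmaD n j ∈ T ↔ j ∈ T := fun j =>
    (invol_mem_image (sig_invol hn) T j).symm.trans (by rw [hσ])
  have hB : (c ∈ T ↔ d ∈ T) := by
    have h1 : sigmaD n c = d := by rw [hc_def, sig_apply (n-1) (by omega), if_pos rfl]
    have := hmem c; rw [h1] at this; exact this.symm
  have hAC : (a ∈ T ∧ b ∈ T ∧ c ∉ T ∧ d ∉ T) ∨ (a ∉ T ∧ b ∉ T ∧ c ∈ T ∧ d ∈ T) :=
    keyAC hn T hσ hE
  have hA : a ∈ T ↔ b ∈ T := by rcases hAC with ⟨h1,h2,_,_⟩|⟨h1,h2,_,_⟩ <;> tauto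
  -- τ′ fixes T
  have hτ'T : tauPrimeD n '' T = T := by
    refine invol_image_eq (tp_invol hn) T fun j => ?_
    rw [← fin_cast_val j]
    have hj : (j : ℕ) ≤ n := by omega
    generalize (j : ℕ) = m at hj ⊢
    rw [tp_apply m hj]
    split_ifs with h1 h2 h3 h4
    · rw [h1]; exact hA.symm
    · rw [h2]; exact hA
    · rw [h3]; exact hB.symm
    · rw [h4]; exact hB
    · exact Iff.rfl
  -- σ fixes τ·T
  have hστT : sigmaD n '' (tauD n '' T) = tauD n '' T := by
    refine invol_image_eq (sig_invol hn) _ fun j => ?_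
    rw [invol_mem_image (tau_invol hn), invol_mem_image (tau_invol hn)]
    rw [← fin_cast_val j]
    have hj : (j : ℕ) ≤ n := by omega
    generalize (j : ℕ) = m at hj ⊢
    rw [sig_apply m hj]
    split_ifs with h1 h2
    · rw [h1, tau_apply n le_rfl, if_neg (by omega), if_neg (by omega), if_neg (by omega),
        if_pos rfl, tau_apply (n-1) (by omega), if_neg (by omega), if_neg (by omega),
        if_pos rfl]
      exact hA.symm
    · rw [h2, tau_apply (n-1) (by omega), if_neg (by omega), if_neg (by omega), if_pos rfl,
        tau_apply n le_rfl, if_neg (by omega), if_neg (by omega), if_neg (by omega),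
        if_pos rfl]
      exact hA
    · exact Iff.rfl
  -- τ′ fixes τ·T
  have hτ'τT : tauPrimeD n '' (tauD n '' T) = tauD n '' T := by
    refine invol_image_eq (tp_invol hn) _ fun j => ?_
    rw [invol_mem_image (tau_invol hn), invol_mem_image (tau_invol hn)]
    rw [← fin_cast_val j]
    have hj : (j : ℕ) ≤ n := by omega
    generalize (j : ℕ) = m at hj ⊢
    rw [tp_apply m hj]
    split_ifs with h1 h2 h3 h4
    · rw [h1, tau_apply 1 (by omega), if_neg (by omega), if_pos rfl,
        tau_apply 0 (by omega), if_pos rfl]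
      exact hB.symm
    · rw [h2, tau_apply 0 (by omega), if_pos rfl, tau_apply 1 (by omega),
        if_neg (by omega), if_pos rfl]
      exact hB
    · rw [h3, tau_apply n le_rfl, if_neg (by omega), if_neg (by omega), if_neg (by omega),
        if_pos rfl, tau_apply (n-1) (by omega), if_neg (by omega), if_neg (by omega),
        if_pos rfl]
      exact hA.symm
    · rw [h4, tau_apply (n-1) (by omega), if_neg (by omega), if_neg (by omega), if_pos rfl,
        tau_apply n le_rfl, if_neg (by omega), if_neg (by omega), if_neg (by omega),
        if_pos rfl]
      exact hA
    · exact Iff.rfl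
  -- τ·T ≠ T
  have hne : tauD n '' T ≠ T := by
    intro h
    have h1 : a ∈ tauD n '' T ↔ a ∈ T := by rw [h]
    rw [invol_mem_image (tau_invol hn)] at h1
    have h2 : tauD n a = c := by
      rw [ha_def, tau_apply 0 (by omega), if_pos rfl]
    rw [h2] at h1
    rcases hAC with ⟨ha', _, hc', _⟩ | ⟨ha', _, hc', _⟩
    · exact hc' (h1.mpr ha')
    · exact ha' (h1.mp hc')
  have hcomp : (tauD n ∘ tauPrimeD n) '' T = tauD n '' T := by
    rw [Set.image_comp, hτ'T]
  have horb : orbD n T = {T, tauD n '' T} := by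
    rw [orbD, hτ'T, hcomp]
    ext U
    simp only [Set.mem_insert_iff, Set.mem_singleton_iff]
    tauto
  have part1 : {T' ∈ orbD n T | sigmaD n '' T' = T'} = {T, tauD n '' T} := by
    ext U
    simp only [Set.mem_setOf_eq, horb, Set.mem_insert_iff, Set.mem_singleton_iff]
    constructor
    · rintro ⟨h, _⟩; exact h
    · rintro (rfl | rfl)
      exacts [⟨Or.inl rfl, hσ⟩, ⟨Or.inr rfl, hστT⟩]
  refine ⟨part1, hne, hτ'T, hτ'τT, ?_⟩
  rw [part1]
  exact Set.ncard_pair (Ne.symm hne)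
end

section
/- Set φ = τ ∘ σ. Then φ ∘ φ = τ′, and for every subset T of Fin (n+1) with σ·T = T one has the equality of orbits {T, φ·T, (φ∘φ)·T, (φ∘φ∘φ)·T} = O(T) = {T, τ·T, τ′·T, (τ∘τ′)·T}. (Thus for σ-invariant types, the orbit under the cyclic group generated by φ — which is Ξ^nr in type ²D_{2n−1} — coincides with the orbit under the Klein four-group {id, τ, τ′, τ∘τ′}.) -/
open Fin.NatCast

private def natSig (n m : ℕ) : ℕ := if m = n - 1 then n else if m = n then n - 1 else m
private def natTau (n m : ℕ) : ℕ :=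
  if m = 0 then n - 1 else if m = 1 then n else if m = n - 1 then 0
  else if m = n then 1 else n - m
private def natTauP (n m : ℕ) : ℕ :=
  if m = 0 then 1 else if m = 1 then 0 else if m = n - 1 then n
  else if m = n then n - 1 else m
private def natPhi (n m : ℕ) : ℕ :=
  if m = 0 then n - 1 else if m = 1 then n else if m = n - 1 then 1
  else if m = n then 0 else n - m

private lemma valcast (n m : ℕ) (hm : m ≤ n) : (((m : ℕ) : Fin (n + 1)) : ℕ) = m := by
  simp [Fin.val_natCast, Nat.mod_eq_of_lt (by omega : m < n + 1)]

private lemma natSig_le (n m : ℕ) (hm : m ≤ n) : natSig n m ≤ n := by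
  unfold natSig; split_ifs <;> omega
private lemma natTau_le (n m : ℕ) (hm : m ≤ n) : natTau n m ≤ n := by
  unfold natTau; split_ifs <;> omega

private lemma sig_cast (n m : ℕ) (hm : m ≤ n) :
    sigmaD n (↑m) = ((natSig n m : ℕ) : Fin (n + 1)) := by
  simp only [sigmaD, natSig, valcast n m hm]; split_ifs <;> rfl

private lemma tau_cast (n m : ℕ) (hm : m ≤ n) :
    tauD n (↑m) = ((natTau n m : ℕ) : Fin (n + 1)) := by
  simp only [tauD, natTau, valcast n m hm]; split_ifs <;> rfl

private lemma taup_cast (n m : ℕ) (hm : m ≤ n) :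
    tauPrimeD n (↑m) = ((natTauP n m : ℕ) : Fin (n + 1)) := by
  simp only [tauPrimeD, natTauP, valcast n m hm]; split_ifs <;> rfl

private lemma natPhiEq (n m : ℕ) (hn : 4 ≤ n) (hm : m ≤ n) :
    natTau n (natSig n m) = natPhi n m := by
  unfold natSig natTau natPhi; split_ifs <;> omega

private lemma natPhi2 (n m : ℕ) (hn : 4 ≤ n) (hm : m ≤ n) :
    natPhi n (natPhi n m) = natTauP n m := by
  unfold natPhi natTauP
  split_ifs <;> first | exact absurd ‹False› not_false | omega

private lemma natKey (n m : ℕ) (hn : 4 ≤ n) (hm : m ≤ n) :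
    natTau n (natSig n (natTau n (natSig n m))) = natTauP n m := by
  rw [natPhiEq n m hn hm, natPhiEq n _ hn, natPhi2 n m hn hm]
  unfold natPhi; split_ifs <;> omega

private lemma lemA (n : ℕ) (hn : 4 ≤ n) :
    (tauD n ∘ sigmaD n) ∘ (tauD n ∘ sigmaD n) = tauPrimeD n := by
  funext i
  have hi : (i : ℕ) ≤ n := by omega
  have e : i = ((i : ℕ) : Fin (n + 1)) := (Fin.cast_val_eq_self i).symm
  rw [e]
  simp only [Function.comp]
  rw [sig_cast n _ hi, tau_cast n _ (natSig_le n _ hi),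
    sig_cast n _ (natTau_le n _ (natSig_le n _ hi)),
    tau_cast n _ (natSig_le n _ (natTau_le n _ (natSig_le n _ hi))),
    taup_cast n _ hi, natKey n _ hn hi]

private lemma lemC (n : ℕ) (hn : 4 ≤ n) :
    sigmaD n ∘ tauPrimeD n = tauPrimeD n ∘ sigmaD n := by
  funext i
  have hi : (i : ℕ) < n + 1 := i.isLt
  have h0 := valcast n 0 (by omega)
  have h1 := valcast n 1 (by omega)
  have h2 := valcast n (n-1) (by omega)
  have h3 := valcast n n (by omega)
  simp only [Function.comp, sigmaD, tauPrimeD]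
  split_ifs at * <;> first | rfl | omega


/-- Type `²D_{2n-1}`: with `φ = τ ∘ σ`, one has `φ ∘ φ = τ′`, and for every `σ`-invariant
type `T` the orbit of `T` under the cyclic group generated by `φ` (which is `Ξ^nr` in type
`²D_{2n-1}`) coincides with the orbit `O(T)` under the Klein four-group
`{id, τ, τ′, τ∘τ′}`. -/
theorem stmt13 (n : ℕ) (hn : 4 ≤ n) :
    (tauD n ∘ sigmaD n) ∘ (tauD n ∘ sigmaD n) = tauPrimeD n ∧
    ∀ T : Set (Fin (n + 1)), sigmaD n '' T = T →
      ({T, (tauD n ∘ sigmaD n) '' T,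
        ((tauD n ∘ sigmaD n) ∘ (tauD n ∘ sigmaD n)) '' T,
        ((tauD n ∘ sigmaD n) ∘ ((tauD n ∘ sigmaD n) ∘ (tauD n ∘ sigmaD n))) '' T} :
          Set (Set (Fin (n + 1)))) = orbD n T := by
  refine ⟨lemA n hn, fun T hT => ?_⟩
  have h1 : (tauD n ∘ sigmaD n) '' T = tauD n '' T := by
    rw [Set.image_comp, hT]
  have h2 : ((tauD n ∘ sigmaD n) ∘ (tauD n ∘ sigmaD n)) '' T = tauPrimeD n '' T := by
    rw [lemA n hn]
  have h3 : ((tauD n ∘ sigmaD n) ∘ ((tauD n ∘ sigmaD n) ∘ (tauD n ∘ sigmaD n))) '' T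
      = (tauD n ∘ tauPrimeD n) '' T := by
    calc ((tauD n ∘ sigmaD n) ∘ ((tauD n ∘ sigmaD n) ∘ (tauD n ∘ sigmaD n))) '' T
        = (tauD n ∘ sigmaD n) '' (tauPrimeD n '' T) := by
          rw [Set.image_comp, lemA n hn]
      _ = tauD n '' ((sigmaD n ∘ tauPrimeD n) '' T) := by
          rw [Set.image_comp, Set.image_comp]
      _ = tauD n '' (tauPrimeD n '' (sigmaD n '' T)) := by
          rw [lemC n hn, Set.image_comp]
      _ = (tauD n ∘ tauPrimeD n) '' T := by rw [hT, Set.image_comp]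
  rw [h1, h2, h3, orbD]
end
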